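/- Let Ω : ℝ → M_n(ℂ) be a matrix-valued function differentiable at t with derivative Ω̇(t). Then the map s ↦ exp(Ω(s)) is differentiable at t, the series Σ_{m=0}^∞ (1/(m+1)!) [Ω(t), Ω̇(t)]_m converges, and the derivative of s ↦ exp(Ω(s)) at t equals (Σ_{m=0}^∞ (1/(m+1)!) [Ω(t), Ω̇(t)]_m) · exp(Ω(t)). -/

import Mathlib

set_option linter.unusedSectionVars false
set_option maxHeartbeats 1000000
set_option synthInstance.maxHeartbeats 1000000

open Finset Filter
open scoped Topology

namespace ExpDerivAux

/-! ### Combinatorial identity -/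

theorem geom_eq_choose_sum {A : Type*} [Ring A] {T S : A} (h : Commute T S) (k : ℕ) :
    ∑ j ∈ range (k+1), T ^ (k - j) * S ^ j
      = ∑ j ∈ range (k+1), ((k+1).choose j) • ((T - S) ^ (k - j) * S ^ j) := by
  set U := T - S with hU
  have hUS : Commute U S := (h.symm.sub_right (Commute.refl S)).symm
  have hSU : Commute S U := hUS.symm
  induction k with
  | zero => simp
  | succ k ih =>
    have hbinom : ∑ j ∈ range (k+2), ((k+1).choose j) • (U ^ (k+1-j) * S ^ j) = T ^ (k+1) := by
      have := Commute.add_pow hSU (k+1)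
      have hTSU : S + U = T := by rw [hU]; abel
      rw [hTSU] at this
      rw [this]
      apply Finset.sum_congr rfl
      intro j hj
      rw [nsmul_eq_mul]
      have hcomm : S ^ j * U ^ (k+1-j) = U ^ (k+1-j) * S ^ j := (hSU.pow_pow j (k+1-j)).eq
      rw [hcomm]
      exact (Nat.cast_commute _ _).eq
    have hG : ∑ j ∈ range (k+2), T ^ (k+1-j) * S ^ j
        = (∑ j ∈ range (k+1), T ^ (k-j) * S ^ j) * S + T ^ (k+1) := by
      rw [Finset.sum_range_succ' (fun j => T ^ (k+1-j) * S ^ j) (k+1)]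
      simp only [Nat.sub_zero, pow_zero, mul_one]
      rw [Finset.sum_mul]
      congr 1
      apply Finset.sum_congr rfl
      intro j hj
      have : k + 1 - (j + 1) = k - j := by omega
      rw [this, mul_assoc, ← pow_succ]
    have hH : ∑ j ∈ range (k+2), ((k+2).choose j) • (U ^ (k+1-j) * S ^ j)
        = (∑ j ∈ range (k+1), ((k+1).choose j) • (U ^ (k-j) * S ^ j)) * S + T ^ (k+1) := by
      rw [Finset.sum_range_succ' (fun j => ((k+2).choose j) • (U ^ (k+1-j) * S ^ j)) (k+1)]
      rw [Finset.sum_range_succ' (fun j => ((k+1).choose j) • (U ^ (k+1-j) * S ^ j)) (k+1)]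
        at hbinom
      simp only [Nat.sub_zero, Nat.choose_zero_right, pow_zero, mul_one, one_smul] at hbinom ⊢
      have hsplit : ∀ j ∈ range (k+1),
          ((k+2).choose (j+1)) • (U ^ (k+1-(j+1)) * S ^ (j+1))
          = (((k+1).choose j) • (U ^ (k-j) * S ^ j)) * S
            + ((k+1).choose (j+1)) • (U ^ (k+1-(j+1)) * S ^ (j+1)) := by
        intro j hj
        have hkj : k + 1 - (j + 1) = k - j := by omega
        rw [hkj, Nat.choose_succ_succ (k+1) j, add_smul]
        congr 1
        rw [smul_mul_assoc, mul_assoc, ← pow_succ]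
      rw [Finset.sum_congr rfl hsplit, Finset.sum_add_distrib, ← Finset.sum_mul]
      rw [add_assoc, hbinom]
    rw [hG, hH, ih]

theorem inv_fact_smul_geom {A : Type*} [Ring A] [Algebra ℂ A] {T S : A} (h : Commute T S)
    (k : ℕ) :
    (((k+1).factorial : ℂ))⁻¹ • ∑ j ∈ range (k+1), T ^ (k-j) * S ^ j
      = ∑ j ∈ range (k+1),
          (((j.factorial : ℂ))⁻¹ * (((k-j+1).factorial : ℂ))⁻¹) • ((T - S) ^ (k-j) * S ^ j) := by
  rw [geom_eq_choose_sum h k, Finset.smul_sum]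
  apply Finset.sum_congr rfl
  intro j hj
  rw [mem_range] at hj
  have hjk : j ≤ k := by omega
  rw [← Nat.cast_smul_eq_nsmul ℂ, smul_smul]
  congr 1
  have hkj1 : k - j + 1 = k + 1 - j := by omega
  have key : (((k+1).choose j : ℕ) : ℂ) * (j.factorial : ℂ) * ((k+1-j).factorial : ℂ)
      = ((k+1).factorial : ℂ) := by
    exact_mod_cast congrArg (Nat.cast (R := ℂ))
      (Nat.choose_mul_factorial_mul_factorial (show j ≤ k + 1 by omega))
  have f1 : (j.factorial : ℂ) ≠ 0 := Nat.cast_ne_zero.mpr j.factorial_ne_zero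
  have f2 : ((k+1-j).factorial : ℂ) ≠ 0 := Nat.cast_ne_zero.mpr (k+1-j).factorial_ne_zero
  have f3 : (((k+1).factorial : ℂ)) ≠ 0 := Nat.cast_ne_zero.mpr (k+1).factorial_ne_zero
  rw [hkj1]
  field_simp
  linear_combination key

/-! ### Operators -/

variable {𝔸 : Type*} [NormedRing 𝔸] [NormedAlgebra ℂ 𝔸] [CompleteSpace 𝔸] [NormOneClass 𝔸]

/-- left multiplication operator -/
noncomputable def L (X : 𝔸) : 𝔸 →L[ℂ] 𝔸 := ContinuousLinearMap.mul ℂ 𝔸 X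
/-- right multiplication operator -/
noncomputable def R (X : 𝔸) : 𝔸 →L[ℂ] 𝔸 := (ContinuousLinearMap.mul ℂ 𝔸).flip X
/-- ad operator -/
noncomputable def U (X : 𝔸) : 𝔸 →L[ℂ] 𝔸 := L X - R X

@[simp] lemma L_apply (X E : 𝔸) : L X E = X * E := rfl
@[simp] lemma R_apply (X E : 𝔸) : R X E = E * X := rfl

lemma norm_L_le (X : 𝔸) : ‖L X‖ ≤ ‖X‖ := ContinuousLinearMap.opNorm_mul_apply_le ℂ 𝔸 X

lemma norm_R_le (X : 𝔸) : ‖R X‖ ≤ ‖X‖ :=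
  ContinuousLinearMap.opNorm_le_bound _ (norm_nonneg X) fun E => by
    rw [R_apply]
    calc ‖E * X‖ ≤ ‖E‖ * ‖X‖ := norm_mul_le E X
    _ = ‖X‖ * ‖E‖ := mul_comm _ _

lemma norm_U_le (X : 𝔸) : ‖U X‖ ≤ 2 * ‖X‖ := by
  calc ‖L X - R X‖ ≤ ‖L X‖ + ‖R X‖ := norm_sub_le _ _
  _ ≤ ‖X‖ + ‖X‖ := add_le_add (norm_L_le X) (norm_R_le X)
  _ = 2 * ‖X‖ := by ring

lemma norm_pow_le_of_le {f : 𝔸 →L[ℂ] 𝔸} {c : ℝ} (hf : ‖f‖ ≤ c) : ∀ i, ‖f ^ i‖ ≤ c ^ i := by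
  intro i
  induction i with
  | zero => simp only [pow_zero]; exact ContinuousLinearMap.norm_id_le
  | succ i ih =>
    calc ‖f ^ (i+1)‖ = ‖f ^ i * f‖ := by rw [pow_succ]
    _ ≤ ‖f ^ i‖ * ‖f‖ := norm_mul_le _ _
    _ ≤ c ^ i * c := mul_le_mul ih hf (norm_nonneg f) (pow_nonneg ((norm_nonneg f).trans hf) i)
    _ = c ^ (i+1) := (pow_succ c i).symm

lemma commute_L_R (X : 𝔸) : Commute (L X) (R X) := by
  apply ContinuousLinearMap.ext
  intro E
  show L X (R X E) = R X (L X E)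
  simp [mul_assoc]

lemma commute_R_U (X : 𝔸) : Commute (R X) (U X) :=
  ((commute_L_R X).symm.sub_right (Commute.refl (R X)))

lemma L_pow (X : 𝔸) (i : ℕ) : (L X) ^ i = L (X ^ i) := by
  induction i with
  | zero => apply ContinuousLinearMap.ext; intro E; simp
  | succ i ih =>
    apply ContinuousLinearMap.ext; intro E
    rw [pow_succ']
    show L X ((L X ^ i) E) = L (X ^ (i+1)) E
    rw [ih]
    simp [pow_succ', mul_assoc]

lemma R_pow (X : 𝔸) (j : ℕ) : (R X) ^ j = R (X ^ j) := by
  induction j with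
  | zero => apply ContinuousLinearMap.ext; intro E; simp
  | succ j ih =>
    apply ContinuousLinearMap.ext; intro E
    rw [pow_succ']
    show R X ((R X ^ j) E) = R (X ^ (j+1)) E
    rw [ih]
    show (E * X ^ j) * X = E * X ^ (j + 1)
    rw [pow_succ, mul_assoc]

lemma norm_L_pow_le (X : 𝔸) (i : ℕ) : ‖(L X) ^ i‖ ≤ ‖X‖ ^ i := norm_pow_le_of_le (norm_L_le X) i
lemma norm_R_pow_le (X : 𝔸) (j : ℕ) : ‖(R X) ^ j‖ ≤ ‖X‖ ^ j := norm_pow_le_of_le (norm_R_le X) j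
lemma norm_U_pow_le (X : 𝔸) (m : ℕ) : ‖(U X) ^ m‖ ≤ (2 * ‖X‖) ^ m :=
  norm_pow_le_of_le (norm_U_le X) m

/-! ### The series -/

/-- `k`-th term operator -/
noncomputable def Vk (X : 𝔸) (k : ℕ) : 𝔸 →L[ℂ] 𝔸 :=
  ∑ j ∈ range (k+1), (L X) ^ (k-j) * (R X) ^ j

/-- the candidate derivative operator -/
noncomputable def AA (X : 𝔸) : 𝔸 →L[ℂ] 𝔸 := ∑' k : ℕ, (((k+1).factorial : ℂ))⁻¹ • Vk X k

/-- terms of `ad` series -/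
noncomputable def aa (X : 𝔸) (m : ℕ) : 𝔸 →L[ℂ] 𝔸 := (((m+1).factorial : ℂ))⁻¹ • (U X) ^ m
/-- terms of right-multiplication exponential series -/
noncomputable def bb (X : 𝔸) (j : ℕ) : 𝔸 →L[ℂ] 𝔸 := ((j.factorial : ℂ))⁻¹ • (R X) ^ j

lemma norm_inv_fact_smul (c : ℕ) (f : 𝔸 →L[ℂ] 𝔸) :
    ‖((c : ℂ))⁻¹ • f‖ = ((c : ℝ))⁻¹ * ‖f‖ := by
  rw [norm_smul ((c : ℂ))⁻¹ f, norm_inv]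
  norm_num

lemma norm_aa_le (X : 𝔸) (m : ℕ) : ‖aa X m‖ ≤ (2 * ‖X‖) ^ m / m.factorial := by
  rw [aa, norm_inv_fact_smul]
  have h1 : (((m+1).factorial : ℝ))⁻¹ ≤ ((m.factorial : ℝ))⁻¹ := by
    apply inv_anti₀
    · exact_mod_cast m.factorial_pos
    · exact_mod_cast Nat.factorial_le (Nat.le_succ m)
  calc (((m+1).factorial : ℝ))⁻¹ * ‖(U X) ^ m‖
      ≤ ((m.factorial : ℝ))⁻¹ * (2 * ‖X‖) ^ m := by
        apply mul_le_mul h1 (norm_U_pow_le X m) (norm_nonneg _)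
        positivity
  _ = (2 * ‖X‖) ^ m / m.factorial := by ring

lemma norm_bb_le (X : 𝔸) (j : ℕ) : ‖bb X j‖ ≤ ‖X‖ ^ j / j.factorial := by
  rw [bb, norm_inv_fact_smul]
  calc ((j.factorial : ℝ))⁻¹ * ‖(R X) ^ j‖ ≤ ((j.factorial : ℝ))⁻¹ * ‖X‖ ^ j := by
        apply mul_le_mul_of_nonneg_left (norm_R_pow_le X j)
        positivity
  _ = ‖X‖ ^ j / j.factorial := by ring

lemma summable_norm_aa (X : 𝔸) : Summable fun m => ‖aa X m‖ :=
  Summable.of_nonneg_of_le (fun _ => norm_nonneg _) (norm_aa_le X)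
    (Real.summable_pow_div_factorial (2 * ‖X‖))

lemma summable_norm_bb (X : 𝔸) : Summable fun j => ‖bb X j‖ :=
  Summable.of_nonneg_of_le (fun _ => norm_nonneg _) (norm_bb_le X)
    (Real.summable_pow_div_factorial ‖X‖)

lemma norm_Vk_le (X : 𝔸) (k : ℕ) : ‖Vk X k‖ ≤ (k+1) * ‖X‖ ^ k := by
  rw [Vk]
  calc ‖∑ j ∈ range (k+1), (L X) ^ (k-j) * (R X) ^ j‖
      ≤ ∑ j ∈ range (k+1), ‖(L X) ^ (k-j) * (R X) ^ j‖ := norm_sum_le _ _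
  _ ≤ ∑ j ∈ range (k+1), ‖X‖ ^ k := by
      apply Finset.sum_le_sum
      intro j hj
      rw [mem_range] at hj
      calc ‖(L X) ^ (k-j) * (R X) ^ j‖ ≤ ‖(L X) ^ (k-j)‖ * ‖(R X) ^ j‖ := norm_mul_le _ _
      _ ≤ ‖X‖ ^ (k-j) * ‖X‖ ^ j := by
          apply mul_le_mul (norm_L_pow_le X _) (norm_R_pow_le X _) (norm_nonneg _)
          positivity
      _ = ‖X‖ ^ (k - j + j) := (pow_add _ _ _).symm
      _ = ‖X‖ ^ k := by congr 1; omega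
  _ = (k+1) * ‖X‖ ^ k := by
      rw [Finset.sum_const, Finset.card_range]
      simp [nsmul_eq_mul]

lemma norm_AAterm_le (X : 𝔸) (k : ℕ) :
    ‖(((k+1).factorial : ℂ))⁻¹ • Vk X k‖ ≤ ‖X‖ ^ k / k.factorial := by
  rw [norm_inv_fact_smul]
  have key : (((k+1).factorial : ℝ))⁻¹ * (k+1) = ((k.factorial : ℝ))⁻¹ := by
    rw [Nat.factorial_succ]
    push_cast
    rw [mul_inv]
    have : ((k:ℝ) + 1) ≠ 0 := by positivity
    field_simp
  calc (((k+1).factorial : ℝ))⁻¹ * ‖Vk X k‖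
      ≤ (((k+1).factorial : ℝ))⁻¹ * ((k+1) * ‖X‖ ^ k) := by
        apply mul_le_mul_of_nonneg_left (norm_Vk_le X k)
        positivity
  _ = ((((k+1).factorial : ℝ))⁻¹ * (k+1)) * ‖X‖ ^ k := by ring
  _ = ((k.factorial : ℝ))⁻¹ * ‖X‖ ^ k := by rw [key]
  _ = ‖X‖ ^ k / k.factorial := by ring

lemma summable_AAterm (X : 𝔸) :
    Summable fun k : ℕ => (((k+1).factorial : ℂ))⁻¹ • Vk X k :=
  Summable.of_norm_bounded (Real.summable_pow_div_factorial ‖X‖) (norm_AAterm_le X)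


/-! ### The operator identity -/

lemma tsum_bb (X : 𝔸) : (∑' j : ℕ, bb X j) = R (NormedSpace.exp X) := by
  have hsum : Summable fun j : ℕ => ((j.factorial : ℂ))⁻¹ • X ^ j :=
    NormedSpace.expSeries_summable' (𝕂 := ℂ) X
  calc (∑' j : ℕ, bb X j)
      = ∑' j : ℕ, (ContinuousLinearMap.mul ℂ 𝔸).flip (((j.factorial : ℂ))⁻¹ • X ^ j) := by
        apply tsum_congr
        intro j
        rw [bb, R_pow]
        simp [R]
  _ = (ContinuousLinearMap.mul ℂ 𝔸).flip (∑' j : ℕ, ((j.factorial : ℂ))⁻¹ • X ^ j) :=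
        (ContinuousLinearMap.map_tsum _ hsum).symm
  _ = R (NormedSpace.exp X) := by rw [NormedSpace.exp_eq_tsum (𝕂 := ℂ)]; rfl

lemma clm_smul_mul (c : ℂ) (f g : 𝔸 →L[ℂ] 𝔸) : (c • f) * g = c • (f * g) := by
  ext E; rfl

lemma clm_mul_smul (f : 𝔸 →L[ℂ] 𝔸) (c : ℂ) (g : 𝔸 →L[ℂ] 𝔸) : f * (c • g) = c • (f * g) := by
  ext E
  show f (c • g E) = c • f (g E)
  exact map_smul f c (g E)

lemma per_k (X : 𝔸) (k : ℕ) :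
    ∑ ij ∈ Finset.HasAntidiagonal.antidiagonal k, bb X ij.1 * aa X ij.2
      = (((k+1).factorial : ℂ))⁻¹ • Vk X k := by
  rw [Finset.Nat.sum_antidiagonal_eq_sum_range_succ_mk]
  have hid := inv_fact_smul_geom (commute_L_R X) k
  rw [Vk, hid]
  apply Finset.sum_congr rfl
  intro i hi
  show bb X i * aa X (k-i) = _
  rw [bb, aa, clm_smul_mul, clm_mul_smul, smul_smul,
    ((commute_R_U X).pow_pow i (k-i)).eq]
  simp only [U]

lemma AA_eq (X : 𝔸) : AA X = R (NormedSpace.exp X) * (∑' m : ℕ, aa X m) := by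
  rw [← tsum_bb X,
    tsum_mul_tsum_eq_tsum_sum_antidiagonal_of_summable_norm (summable_norm_bb X)
      (summable_norm_aa X), AA]
  exact tsum_congr fun k => (per_k X k).symm

lemma tsum_aa_apply (X E : 𝔸) :
    (∑' m : ℕ, aa X m) E = ∑' m : ℕ, (((m+1).factorial : ℂ))⁻¹ • ((U X) ^ m) E := by
  have hs : Summable (aa X) := (summable_norm_aa X).of_norm
  calc (∑' m : ℕ, aa X m) E
      = ContinuousLinearMap.apply ℂ 𝔸 E (∑' m : ℕ, aa X m) := rfl
  _ = ∑' m : ℕ, ContinuousLinearMap.apply ℂ 𝔸 E (aa X m) :=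
        ContinuousLinearMap.map_tsum _ hs
  _ = ∑' m : ℕ, (((m+1).factorial : ℂ))⁻¹ • ((U X) ^ m) E := by
        apply tsum_congr
        intro m
        show (aa X m) E = _
        rw [aa]
        rfl

lemma summable_ad (X E : 𝔸) :
    Summable fun m : ℕ => (((m+1).factorial : ℂ))⁻¹ • ((U X) ^ m) E := by
  have hs : Summable (aa X) := (summable_norm_aa X).of_norm
  have h2 := hs.map (ContinuousLinearMap.apply ℂ 𝔸 E) (ContinuousLinearMap.continuous _)
  exact h2

lemma AA_apply (X E : 𝔸) :
    AA X E = (∑' m : ℕ, (((m+1).factorial : ℂ))⁻¹ • ((U X) ^ m) E) * NormedSpace.exp X := by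
  rw [AA_eq, ContinuousLinearMap.mul_apply, tsum_aa_apply]
  rfl


/-! ### Analytic estimates -/

/-- derivative of the `k`-th power, evaluated -/
noncomputable def W (X E : 𝔸) (k : ℕ) : 𝔸 := ∑ j ∈ range k, X ^ (k-1-j) * E * X ^ j

lemma W_zero (X E : 𝔸) : W X E 0 = 0 := by simp [W]

lemma W_succ (X E : 𝔸) (k : ℕ) : W X E (k+1) = X * W X E k + E * X ^ k := by
  rw [W, W, Finset.sum_range_succ]
  have h0 : X ^ (k+1-1-k) * E * X ^ k = E * X ^ k := by
    have : k+1-1-k = 0 := by omega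
    rw [this, pow_zero, one_mul]
  rw [h0]
  congr 1
  rw [Finset.mul_sum]
  apply Finset.sum_congr rfl
  intro j hj
  rw [mem_range] at hj
  have hexp : k+1-1-j = (k-1-j) + 1 := by omega
  rw [hexp, pow_succ']
  simp [mul_assoc]

lemma Vk_apply (X E : 𝔸) (k : ℕ) : Vk X k E = W X E (k+1) := by
  rw [Vk, W, ContinuousLinearMap.sum_apply]
  apply Finset.sum_congr rfl
  intro j hj
  rw [ContinuousLinearMap.mul_apply, L_pow, R_pow]
  show X ^ (k-j) * (E * X ^ j) = X ^ (k+1-1-j) * E * X ^ j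
  have : k+1-1-j = k-j := by omega
  rw [this, mul_assoc]

lemma norm_pow_le'' (Y : 𝔸) (i : ℕ) : ‖Y ^ i‖ ≤ ‖Y‖ ^ i := by
  induction i with
  | zero => simp
  | succ i ih =>
    calc ‖Y ^ (i+1)‖ = ‖Y ^ i * Y‖ := by rw [pow_succ]
    _ ≤ ‖Y ^ i‖ * ‖Y‖ := norm_mul_le _ _
    _ ≤ ‖Y‖ ^ i * ‖Y‖ := mul_le_mul_of_nonneg_right ih (norm_nonneg Y)
    _ = ‖Y‖ ^ (i+1) := (pow_succ _ _).symm

lemma norm_W_le (X E : 𝔸) (k : ℕ) : ‖W X E k‖ ≤ k * ‖X‖ ^ (k-1) * ‖E‖ := by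
  rw [W]
  calc ‖∑ j ∈ range k, X ^ (k-1-j) * E * X ^ j‖
      ≤ ∑ j ∈ range k, ‖X ^ (k-1-j) * E * X ^ j‖ := norm_sum_le _ _
  _ ≤ ∑ _j ∈ range k, ‖X‖ ^ (k-1) * ‖E‖ := by
      apply Finset.sum_le_sum
      intro j hj
      rw [mem_range] at hj
      calc ‖X ^ (k-1-j) * E * X ^ j‖ ≤ ‖X ^ (k-1-j) * E‖ * ‖X ^ j‖ := norm_mul_le _ _
      _ ≤ ‖X ^ (k-1-j)‖ * ‖E‖ * ‖X ^ j‖ :=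
          mul_le_mul_of_nonneg_right (norm_mul_le _ _) (norm_nonneg _)
      _ ≤ ‖X‖ ^ (k-1-j) * ‖E‖ * ‖X‖ ^ j := by
          apply mul_le_mul (mul_le_mul_of_nonneg_right (norm_pow_le'' X _) (norm_nonneg E))
            (norm_pow_le'' X j) (norm_nonneg _)
          positivity
      _ = (‖X‖ ^ (k-1-j) * ‖X‖ ^ j) * ‖E‖ := by ring
      _ = ‖X‖ ^ (k-1) * ‖E‖ := by
          rw [← pow_add]
          congr 2
          omega
  _ = k * ‖X‖ ^ (k-1) * ‖E‖ := by
      rw [Finset.sum_const, Finset.card_range, nsmul_eq_mul]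
      ring

lemma summable_Wterm (X E : 𝔸) :
    Summable fun k : ℕ => ((k.factorial : ℂ))⁻¹ • W X E k := by
  apply (summable_nat_add_iff 1).mp
  have heq : (fun k : ℕ => (((k+1).factorial : ℂ))⁻¹ • W X E (k+1))
      = fun k : ℕ => (ContinuousLinearMap.apply ℂ 𝔸 E) ((((k+1).factorial : ℂ))⁻¹ • Vk X k) := by
    funext k
    simp [Vk_apply]
  show Summable fun k : ℕ => (((k+1).factorial : ℂ))⁻¹ • W X E (k+1)
  rw [heq]
  exact (summable_AAterm X).map _ (ContinuousLinearMap.continuous _)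

lemma AA_apply_W (X E : 𝔸) :
    AA X E = ∑' k : ℕ, ((k.factorial : ℂ))⁻¹ • W X E k := by
  have hs := summable_Wterm X E
  rw [Summable.tsum_eq_zero_add hs]
  have h0 : (((0 : ℕ).factorial : ℂ))⁻¹ • W X E 0 = 0 := by simp [W_zero]
  rw [h0, zero_add]
  calc AA X E = ContinuousLinearMap.apply ℂ 𝔸 E (AA X) := rfl
  _ = ∑' k : ℕ, ContinuousLinearMap.apply ℂ 𝔸 E ((((k+1).factorial : ℂ))⁻¹ • Vk X k) := by
      rw [AA]
      exact ContinuousLinearMap.map_tsum _ (summable_AAterm X)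
  _ = ∑' k : ℕ, (((k+1).factorial : ℂ))⁻¹ • W X E (k+1) := by
      apply tsum_congr
      intro k
      simp [Vk_apply]

lemma norm_pow_sub_pow_le (X E : 𝔸) (k : ℕ) :
    ‖(X+E)^k - X^k‖ ≤ (‖X‖+‖E‖)^k - ‖X‖^k := by
  induction k with
  | zero => simp
  | succ k ih =>
    have hid : (X+E)^(k+1) - X^(k+1) = X * ((X+E)^k - X^k) + E * (X+E)^k := by
      rw [pow_succ' (X+E) k, pow_succ' X k, add_mul, mul_sub]
      abel
    rw [hid]
    calc ‖X * ((X+E)^k - X^k) + E * (X+E)^k‖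
        ≤ ‖X * ((X+E)^k - X^k)‖ + ‖E * (X+E)^k‖ := norm_add_le _ _
    _ ≤ ‖X‖ * ‖(X+E)^k - X^k‖ + ‖E‖ * ‖(X+E)^k‖ :=
        add_le_add (norm_mul_le _ _) (norm_mul_le _ _)
    _ ≤ ‖X‖ * ((‖X‖+‖E‖)^k - ‖X‖^k) + ‖E‖ * (‖X‖+‖E‖)^k := by
        apply add_le_add (mul_le_mul_of_nonneg_left ih (norm_nonneg X))
        apply mul_le_mul_of_nonneg_left ?_ (norm_nonneg E)
        calc ‖(X+E)^k‖ ≤ ‖X+E‖^k := norm_pow_le'' _ k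
        _ ≤ (‖X‖+‖E‖)^k := pow_le_pow_left₀ (norm_nonneg _) (norm_add_le X E) k
    _ = (‖X‖+‖E‖)^(k+1) - ‖X‖^(k+1) := by ring

lemma norm_rem_le (X E : 𝔸) (k : ℕ) :
    ‖(X+E)^k - X^k - W X E k‖
      ≤ (‖X‖+‖E‖)^k - ‖X‖^k - k * ‖X‖^(k-1) * ‖E‖ := by
  induction k with
  | zero => simp [W_zero]
  | succ k ih =>
    have hid : (X+E)^(k+1) - X^(k+1) - W X E (k+1)
        = X * ((X+E)^k - X^k - W X E k) + E * ((X+E)^k - X^k) := by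
      rw [W_succ, pow_succ' (X+E) k, pow_succ' X k, add_mul, mul_sub, mul_sub, mul_sub]
      abel
    have hxk : ‖X‖ * ((k : ℝ) * ‖X‖^(k-1)) = (k : ℝ) * ‖X‖^k := by
      cases k with
      | zero => simp
      | succ k =>
        rw [Nat.succ_sub_one]
        push_cast
        ring
    rw [hid]
    calc ‖X * ((X+E)^k - X^k - W X E k) + E * ((X+E)^k - X^k)‖
        ≤ ‖X‖ * ‖(X+E)^k - X^k - W X E k‖ + ‖E‖ * ‖(X+E)^k - X^k‖ :=
        le_trans (norm_add_le _ _) (add_le_add (norm_mul_le _ _) (norm_mul_le _ _))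
    _ ≤ ‖X‖ * ((‖X‖+‖E‖)^k - ‖X‖^k - k * ‖X‖^(k-1) * ‖E‖)
          + ‖E‖ * ((‖X‖+‖E‖)^k - ‖X‖^k) :=
        add_le_add (mul_le_mul_of_nonneg_left ih (norm_nonneg X))
          (mul_le_mul_of_nonneg_left (norm_pow_sub_pow_le X E k) (norm_nonneg E))
    _ = (‖X‖+‖E‖)^(k+1) - ‖X‖^(k+1) - ((k+1 : ℕ) : ℝ) * ‖X‖^(k+1-1) * ‖E‖ := by
        rw [Nat.add_sub_cancel]
        have h2 : ‖X‖ * ((k : ℝ) * ‖X‖^(k-1) * ‖E‖) = (k : ℝ) * ‖X‖^k * ‖E‖ := by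
          rw [show ‖X‖ * ((k : ℝ) * ‖X‖^(k-1) * ‖E‖) = (‖X‖ * ((k : ℝ) * ‖X‖^(k-1))) * ‖E‖
            from by ring, hxk]
        rw [mul_sub, mul_sub, h2]
        push_cast
        ring

lemma hasSum_exp_real (y : ℝ) :
    HasSum (fun k : ℕ => y^k / k.factorial) (Real.exp y) := by
  have h := (Real.summable_pow_div_factorial y).hasSum
  have he : Real.exp y = ∑' k : ℕ, y^k / k.factorial := by
    rw [Real.exp_eq_exp_ℝ, NormedSpace.exp_eq_tsum_div]
  rwa [← he] at h

lemma hasSum_deriv_real (x ε : ℝ) :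
    HasSum (fun k : ℕ => (k : ℝ) * x^(k-1) * ε / k.factorial) (ε * Real.exp x) := by
  have hshift : (fun k : ℕ => ((k:ℝ)+1) * x^(k+1-1) * ε / (k+1).factorial)
      = fun k : ℕ => ε * (x^k / k.factorial) := by
    funext k
    have hf : ((k+1).factorial : ℝ) = ((k:ℝ)+1) * k.factorial := by
      exact_mod_cast Nat.factorial_succ k
    rw [Nat.add_sub_cancel, hf]
    have h1 : ((k:ℝ)+1) ≠ 0 := by positivity
    have h2 : (k.factorial : ℝ) ≠ 0 := by positivity
    field_simp
  have h := (hasSum_exp_real x).mul_left ε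
  rw [← hshift] at h
  have h4 := (hasSum_nat_add_iff (f := fun k : ℕ => (k:ℝ) * x^(k-1) * ε / k.factorial) 1).mp
    (by simpa using h)
  simpa using h4

lemma key_bound (X E : 𝔸) :
    ‖NormedSpace.exp (X+E) - NormedSpace.exp X - AA X E‖
      ≤ Real.exp (‖X‖+‖E‖) - Real.exp ‖X‖ - ‖E‖ * Real.exp ‖X‖ := by
  have s1 : Summable (fun k : ℕ => ((k.factorial:ℂ))⁻¹ • (X+E)^k) :=
    NormedSpace.expSeries_summable' (𝕂 := ℂ) (X+E)
  have s2 : Summable (fun k : ℕ => ((k.factorial:ℂ))⁻¹ • X^k) :=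
    NormedSpace.expSeries_summable' (𝕂 := ℂ) X
  have s3 := summable_Wterm X E
  have e1 : NormedSpace.exp (X+E) = ∑' k : ℕ, ((k.factorial:ℂ))⁻¹ • (X+E)^k := by
    rw [NormedSpace.exp_eq_tsum (𝕂 := ℂ)]
  have e2 : NormedSpace.exp X = ∑' k : ℕ, ((k.factorial:ℂ))⁻¹ • X^k := by
    rw [NormedSpace.exp_eq_tsum (𝕂 := ℂ)]
  have hdiff : NormedSpace.exp (X+E) - NormedSpace.exp X - AA X E
      = ∑' k : ℕ, ((k.factorial:ℂ))⁻¹ • ((X+E)^k - X^k - W X E k) := by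
    rw [e1, e2, AA_apply_W, ← Summable.tsum_sub s1 s2, ← Summable.tsum_sub (s1.sub s2) s3]
    apply tsum_congr
    intro k
    rw [smul_sub, smul_sub]
  rw [hdiff]
  have hssum : HasSum
      (fun k : ℕ => (‖X‖+‖E‖)^k / k.factorial - ‖X‖^k / k.factorial
        - (k : ℝ) * ‖X‖^(k-1) * ‖E‖ / k.factorial)
      (Real.exp (‖X‖+‖E‖) - Real.exp ‖X‖ - ‖E‖ * Real.exp ‖X‖) := by
    have := ((hasSum_exp_real (‖X‖+‖E‖)).sub (hasSum_exp_real ‖X‖)).sub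
      (hasSum_deriv_real ‖X‖ ‖E‖)
    simpa using this
  apply tsum_of_norm_bounded hssum
  intro k
  rw [norm_smul ((k.factorial : ℂ))⁻¹ _, norm_inv]
  have hnc : ‖((k.factorial : ℕ) : ℂ)‖ = (k.factorial : ℝ) := by
    simp
  rw [hnc]
  have hfk : (0:ℝ) ≤ ((k.factorial : ℝ))⁻¹ := by positivity
  calc ((k.factorial : ℝ))⁻¹ * ‖(X+E)^k - X^k - W X E k‖
      ≤ ((k.factorial : ℝ))⁻¹ * ((‖X‖+‖E‖)^k - ‖X‖^k - k * ‖X‖^(k-1) * ‖E‖) :=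
        mul_le_mul_of_nonneg_left (norm_rem_le X E k) hfk
  _ = (‖X‖+‖E‖)^k / k.factorial - ‖X‖^k / k.factorial
        - (k : ℝ) * ‖X‖^(k-1) * ‖E‖ / k.factorial := by ring

theorem hasFDerivAt_exp (X : 𝔸) : HasFDerivAt (NormedSpace.exp : 𝔸 → 𝔸) (AA X) X := by
  rw [hasFDerivAt_iff_isLittleO_nhds_zero]
  have hψ : HasDerivAt (fun ε : ℝ => Real.exp ‖X‖ * (Real.exp ε - 1 - ε)) 0 0 := by
    have h := (((Real.hasDerivAt_exp 0).sub_const 1).sub (hasDerivAt_id 0)).const_mul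
      (Real.exp ‖X‖)
    simpa using h
  have hlo : (fun ε : ℝ => Real.exp ‖X‖ * (Real.exp ε - 1 - ε)) =o[nhds (0:ℝ)]
      (fun ε : ℝ => ε) := by
    have h := hasDerivAt_iff_isLittleO.mp hψ
    simpa using h
  have hcomp : (fun E : 𝔸 => Real.exp ‖X‖ * (Real.exp ‖E‖ - 1 - ‖E‖)) =o[nhds (0:𝔸)]
      (fun E : 𝔸 => ‖E‖) :=
    hlo.comp_tendsto tendsto_norm_zero
  have hb : ∀ E : 𝔸, ‖NormedSpace.exp (X+E) - NormedSpace.exp X - AA X E‖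
      ≤ Real.exp ‖X‖ * (Real.exp ‖E‖ - 1 - ‖E‖) := by
    intro E
    have h := key_bound X E
    have heq : Real.exp (‖X‖+‖E‖) - Real.exp ‖X‖ - ‖E‖ * Real.exp ‖X‖
        = Real.exp ‖X‖ * (Real.exp ‖E‖ - 1 - ‖E‖) := by
      rw [Real.exp_add]
      ring
    linarith [h]
  have hBigO : (fun E : 𝔸 => NormedSpace.exp (X+E) - NormedSpace.exp X - AA X E)
      =O[nhds (0:𝔸)] (fun E : 𝔸 => Real.exp ‖X‖ * (Real.exp ‖E‖ - 1 - ‖E‖)) := by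
    apply Asymptotics.IsBigO.of_bound 1
    filter_upwards with E
    rw [one_mul]
    calc ‖NormedSpace.exp (X+E) - NormedSpace.exp X - AA X E‖
        ≤ Real.exp ‖X‖ * (Real.exp ‖E‖ - 1 - ‖E‖) := hb E
    _ ≤ ‖Real.exp ‖X‖ * (Real.exp ‖E‖ - 1 - ‖E‖)‖ := le_abs_self _
  have hfinal := hBigO.trans_isLittleO hcomp
  exact Asymptotics.isLittleO_norm_right.mp hfinal


end ExpDerivAux

/-- Iterated commutators: `[X,Y]₀ = Y`, `[X,Y]_{m+1} = [X,[X,Y]_m]`. -/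
noncomputable def iterComm {n : ℕ} (X Y : Matrix (Fin n) (Fin n) ℂ) :
    ℕ → Matrix (Fin n) (Fin n) ℂ
  | 0 => Y
  | m + 1 => X * iterComm X Y m - iterComm X Y m * X

section MatrixHelper

open ExpDerivAux

attribute [local instance] Matrix.linftyOpNormedRing Matrix.linftyOpNormedAlgebra
  Matrix.linftyOpNormedSpace

lemma iterComm_eq_U_pow {n : ℕ} [Nonempty (Fin n)] (X Y : Matrix (Fin n) (Fin n) ℂ) (m : ℕ) :
    ((U X) ^ m) Y = iterComm X Y m := by
  induction m with
  | zero => simp [iterComm]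
  | succ m ih =>
    rw [pow_succ' (U X) m]
    show (U X) (((U X) ^ m) Y) = iterComm X Y (m+1)
    rw [ih]
    show (L X - R X) (iterComm X Y m) = iterComm X Y (m+1)
    rw [ContinuousLinearMap.sub_apply, ExpDerivAux.L_apply, ExpDerivAux.R_apply]
    rfl

theorem matrix_helper {n : ℕ} [Nonempty (Fin n)] (Ω : ℝ → Matrix (Fin n) (Fin n) ℂ) (t : ℝ)
    (Ω' : Matrix (Fin n) (Fin n) ℂ)
    (hΩ : Filter.Tendsto (slope Ω t) (nhdsWithin t {t}ᶜ) (nhds Ω')) :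
    (Summable fun m : ℕ => (((m + 1).factorial : ℂ))⁻¹ • iterComm (Ω t) Ω' m) ∧
      Filter.Tendsto (slope (fun s => NormedSpace.exp (Ω s)) t) (nhdsWithin t {t}ᶜ)
        (nhds ((∑' m : ℕ, (((m + 1).factorial : ℂ))⁻¹ • iterComm (Ω t) Ω' m) *
          NormedSpace.exp (Ω t))) := by
  replace hΩ := (hasDerivAt_iff_tendsto_slope (𝕜 := ℝ)).mpr hΩ
  set X := Ω t with hX
  have hterm : (fun m : ℕ => (((m + 1).factorial : ℂ))⁻¹ • iterComm X Ω' m)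
      = fun m : ℕ => (((m + 1).factorial : ℂ))⁻¹ • ((U X) ^ m) Ω' := by
    funext m
    rw [iterComm_eq_U_pow]
  constructor
  · rw [hterm]
    exact summable_ad X Ω'
  · have hexp := hasFDerivAt_exp (𝔸 := Matrix (Fin n) (Fin n) ℂ) X
    have hchain := (hexp.restrictScalars ℝ).comp_hasDerivAt t hΩ
    have hval : AA X Ω' = (∑' m : ℕ, (((m + 1).factorial : ℂ))⁻¹ • iterComm X Ω' m) *
        NormedSpace.exp X := by
      rw [AA_apply, hterm]
      rfl
    have hd : HasDerivAt (fun s => NormedSpace.exp (Ω s))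
        ((∑' m : ℕ, (((m + 1).factorial : ℂ))⁻¹ • iterComm X Ω' m) *
          NormedSpace.exp X) t := by
      rw [← hval]
      exact hchain
    exact hasDerivAt_iff_tendsto_slope.mp hd

end MatrixHelper

attribute [local instance] Matrix.normedAddCommGroup Matrix.normedSpace

/-- If `Ω : ℝ → M_n(ℂ)` is differentiable at `t` with derivative `Ω'`, then
`s ↦ exp (Ω s)` is differentiable at `t`, the series
`Σ_{m=0}^∞ (1/(m+1)!) [Ω t, Ω']_m` converges, and the derivative equals
`(Σ_{m=0}^∞ (1/(m+1)!) [Ω t, Ω']_m) * exp (Ω t)`. -/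
theorem hasDerivAt_exp_eq_tsum_iterComm {n : ℕ} (Ω : ℝ → Matrix (Fin n) (Fin n) ℂ) (t : ℝ)
    (Ω' : Matrix (Fin n) (Fin n) ℂ) (hΩ : HasDerivAt Ω Ω' t) :
    (Summable fun m : ℕ => (((m + 1).factorial : ℂ))⁻¹ • iterComm (Ω t) Ω' m) ∧
      HasDerivAt (fun s => NormedSpace.exp (Ω s))
        ((∑' m : ℕ, (((m + 1).factorial : ℂ))⁻¹ • iterComm (Ω t) Ω' m) *
          NormedSpace.exp (Ω t)) t := by
  cases n with
  | zero =>
    have hz : ∀ A : Matrix (Fin 0) (Fin 0) ℂ, A = 0 := fun A => by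
      ext i j
      exact i.elim0
    constructor
    · have h1 : (fun m : ℕ => (((m + 1).factorial : ℂ))⁻¹ • iterComm (Ω t) Ω' m)
          = fun _ => (0 : Matrix (Fin 0) (Fin 0) ℂ) := funext fun m => hz _
      rw [h1]
      exact summable_zero
    · have h1 : (fun s : ℝ => NormedSpace.exp (Ω s)) = fun _ => (0 : Matrix (Fin 0) (Fin 0) ℂ) :=
        funext fun s => hz _
      have h2 : (∑' m : ℕ, (((m + 1).factorial : ℂ))⁻¹ • iterComm (Ω t) Ω' m) *
          NormedSpace.exp (Ω t) = 0 := hz _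
      rw [h1, h2]
      exact hasDerivAt_const t 0
  | succ n =>
    replace hΩ := hasDerivAt_iff_tendsto_slope.mp hΩ
    obtain ⟨h1, h2⟩ := matrix_helper Ω t Ω' hΩ
    refine ⟨h1, ?_⟩
    apply hasDerivAt_iff_tendsto_slope.mpr
    exact h2
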